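/- Define polynomials f_{k,i}(x) by f_{0,0}(x) = 1, f_{k,i}(x) = 0 for k < i, and the recursion f_{k+1,i}(x) = (1+x)^{k+1-i} · (Σ_{j=0}^{i} f_{k,j}(x)) − f_{k,i}(x) for 0 ≤ i ≤ k+1. Then for all 0 ≤ i ≤ k, f_{k,i}(x) = (1+x)^{binomial(i,2)} · Π_{ℓ=i+1}^{k} ((1+x)^ℓ − 1). -/

import Mathlib

open Polynomial Finset

private lemma choose_succ_two (n : ℕ) : (n+1).choose 2 = n + n.choose 2 := by
  rw [Nat.choose_succ_succ]; simp [Nat.choose_one_right]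

private lemma gauss (y : Polynomial ℤ) :
    ∀ i : ℕ, ∑ j ∈ range (i+1), y ^ (j.choose 2) * ∏ ℓ ∈ Ioc j i, (y ^ ℓ - 1)
      = y ^ ((i+1).choose 2)
  | 0 => by simp
  | (i+1) => by
    rw [Finset.sum_range_succ]
    have h : ∀ j ∈ range (i+1), y ^ (j.choose 2) * ∏ ℓ ∈ Ioc j (i+1), (y^ℓ - 1)
        = (y ^ (j.choose 2) * ∏ ℓ ∈ Ioc j i, (y^ℓ-1)) * (y^(i+1) - 1) := by
      intro j hj
      rw [mem_range] at hj
      rw [Finset.prod_Ioc_succ_top (by omega : j ≤ i)]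
      ring
    rw [Finset.sum_congr rfl h, ← Finset.sum_mul, gauss y i,
      choose_succ_two (i+1), pow_add]
    simp
    ring

theorem stmt5 (f : ℕ → ℕ → Polynomial ℤ) (h00 : f 0 0 = 1)
    (hz : ∀ k i, k < i → f k i = 0)
    (hrec : ∀ k i, i ≤ k + 1 →
      f (k + 1) i = (1 + X) ^ (k + 1 - i) * (∑ j ∈ Finset.range (i + 1), f k j) - f k i)
    (k i : ℕ) (hik : i ≤ k) :
    f k i = (1 + X) ^ (Nat.choose i 2) *
      ∏ ℓ ∈ Finset.Icc (i + 1) k, ((1 + X) ^ ℓ - 1) := by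
  set y : Polynomial ℤ := 1 + X with hy
  induction k generalizing i with
  | zero =>
    interval_cases i
    simpa using h00
  | succ k ih =>
    -- sum lemma for level k
    have hsum : ∀ i ≤ k, ∑ j ∈ range (i+1), f k j
        = y ^ ((i+1).choose 2) * ∏ ℓ ∈ Icc (i+1) k, (y^ℓ - 1) := by
      intro i hi
      have : ∀ j ∈ range (i+1), f k j
          = (y ^ (j.choose 2) * ∏ ℓ ∈ Ioc j i, (y^ℓ-1)) * ∏ ℓ ∈ Icc (i+1) k, (y^ℓ-1) := by
        intro j hj
        rw [mem_range] at hj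
        rw [ih j (by omega)]
        have hsplit : (∏ ℓ ∈ Ioc j i, (y^ℓ-1)) * ∏ ℓ ∈ Ioc i k, (y^ℓ-1)
            = ∏ ℓ ∈ Ioc j k, (y^ℓ-1) :=
          Finset.prod_Ioc_consecutive _ (by omega) hi
        have h1 : Icc (j+1) k = Ioc j k := by rw [Finset.Icc_add_one_left_eq_Ioc]
        have h2 : Icc (i+1) k = Ioc i k := by rw [Finset.Icc_add_one_left_eq_Ioc]
        rw [h1, h2, ← hsplit]
        ring
      rw [Finset.sum_congr rfl this, ← Finset.sum_mul, gauss]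
    rcases Nat.lt_or_ge i (k+1) with hi | hi
    · have hi' : i ≤ k := by omega
      rw [hrec k i (by omega), hsum i hi', ih i hi']
      rw [show Icc (i+1) (k+1) = Ioc i (k+1) from by rw [Finset.Icc_add_one_left_eq_Ioc],
        Finset.prod_Ioc_succ_top hi', show Ioc i k = Icc (i+1) k from by rw [Finset.Icc_add_one_left_eq_Ioc]]
      have : k + 1 - i + (i+1).choose 2 = (k+1) + i.choose 2 := by
        rw [choose_succ_two]; omega
      rw [← mul_assoc, ← pow_add, this, pow_add]
      ring
    · have hi' : i = k + 1 := by omega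
      subst hi'
      rw [hrec k (k+1) le_rfl, hz k (k+1) (by omega)]
      rw [Finset.sum_range_succ, hz k (k+1) (by omega), add_zero, hsum k le_rfl]
      simp
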